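/- arXiv:2504.20269 — 5 statements merged into one kernel-verified Lean document; each statement's English description precedes it below -/
import Mathlib

section
/- Let (X, Σ, μ) be a probability space, let φ : X → X be an invertible measure-preserving map, let F ⊆ L²(X) be a finite-dimensional linear subspace and let ε > 0. Then there exist K₀ ∈ ℕ and δ > 0 such that: whenever T̂ : F → F is a linear operator and K ≥ K₀ is such that ‖T̂^k f − T_φ^k f‖₂ ≤ δ‖f‖₂ holds for all f ∈ F and all k ∈ {0, …, K−1}, then dim(F) ≥ K (h_apr(T_φ, F) − ε). -/
open MeasureTheory

/-- `H_apr(ω, δ)`: the minimal dimension of a finite-dimensional subspace `F ⊆ H` such that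
every `x ∈ ω` is within distance `< δ` of some `y ∈ F`. -/
noncomputable def Hapr {H : Type*} [NormedAddCommGroup H] [InnerProductSpace ℂ H]
    (ω : Set H) (δ : ℝ) : ℕ :=
  sInf {d : ℕ | ∃ F : Submodule ℂ H, FiniteDimensional ℂ ↥F ∧ Module.finrank ℂ ↥F = d ∧
    ∀ x ∈ ω, ∃ y ∈ F, ‖x - y‖ < δ}

/-- `h_apr(T, ω, δ) = lim_{n → ∞} (1/n) H_apr(⋃_{k=0}^{n-1} T^k ω, δ)` (the limit exists by
subadditivity, hence coincides with the limit superior used here). -/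
noncomputable def haprδ {H : Type*} [NormedAddCommGroup H] [InnerProductSpace ℂ H]
    (T : H → H) (ω : Set H) (δ : ℝ) : ℝ :=
  Filter.limsup (fun n : ℕ => (Hapr (⋃ k < n, T^[k] '' ω) δ : ℝ) / n) Filter.atTop

/-- `h_apr(T, ω) = sup_{δ > 0} h_apr(T, ω, δ)`, the approximation entropy of `ω` with
respect to `T`. -/
noncomputable def haprω {H : Type*} [NormedAddCommGroup H] [InnerProductSpace ℂ H]
    (T : H → H) (ω : Set H) : ℝ :=
  ⨆ (δ : ℝ) (_ : 0 < δ), haprδ T ω δ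

/-- `h_apr(T, F)`: the approximation entropy of a subspace `F`, the supremum of `h_apr(T, ω)`
over all finite subsets `ω ⊆ F`. -/
noncomputable def haprSub {H : Type*} [NormedAddCommGroup H] [InnerProductSpace ℂ H]
    (T : H → H) (F : Submodule ℂ H) : ℝ :=
  ⨆ (ω : Finset H) (_ : (ω : Set H) ⊆ (F : Set H)), haprω T (ω : Set H)

section AuxLemmas

variable {H : Type*} [NormedAddCommGroup H] [InnerProductSpace ℂ H]

/-- A chain of subspaces containing all the images `T^{qK} F` for `q < n`, of dimension at
most `n · dim F`. -/
lemma exists_chain (T : H →L[ℂ] H) (F : Submodule ℂ H) [FiniteDimensional ℂ ↥F] (K : ℕ)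
    (n : ℕ) : ∃ E : Submodule ℂ H, FiniteDimensional ℂ ↥E ∧
      Module.finrank ℂ ↥E ≤ n * Module.finrank ℂ ↥F ∧
      ∀ q, q < n → Submodule.map (T ^ (q * K)).toLinearMap F ≤ E := by
  induction n with
  | zero => exact ⟨⊥, inferInstance, by simp, fun q hq => absurd hq (by omega)⟩
  | succ n ih =>
    obtain ⟨E, hfd, hrk, hle⟩ := ih
    refine ⟨E ⊔ Submodule.map (T ^ (n * K)).toLinearMap F, inferInstance, ?_, ?_⟩
    · calc Module.finrank ℂ ↥(E ⊔ Submodule.map (T ^ (n * K)).toLinearMap F)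
          ≤ Module.finrank ℂ ↥E + Module.finrank ℂ ↥(Submodule.map (T ^ (n * K)).toLinearMap F) :=
            Submodule.finrank_add_le_finrank_add_finrank _ _
      _ ≤ n * Module.finrank ℂ ↥F + Module.finrank ℂ ↥F := by
            have := Submodule.finrank_map_le (T ^ (n * K)).toLinearMap F
            omega
      _ = (n + 1) * Module.finrank ℂ ↥F := by ring
    · intro q hq
      rcases Nat.lt_succ_iff_lt_or_eq.mp hq with h | h
      · exact (hle q h).trans le_sup_left
      · subst h; exact le_sup_right

/-- The core estimate: if `T` acts isometrically through its powers and `That : F → F`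
`δ`-shadows `T` on `F` for `K` steps, with `δ`-errors on `ω` strictly below `δ'`, then the
`δ'`-approximation entropy of `ω` is at most `dim F / K`. -/
lemma core (T : H →L[ℂ] H) (him : ∀ (m : ℕ) (u : H), ‖(T ^ m) u‖ = ‖u‖)
    (F : Submodule ℂ H) [FiniteDimensional ℂ ↥F] (ω : Finset H)
    (hsub : (ω : Set H) ⊆ (F : Set H)) (δ δ' : ℝ) (hδ' : 0 < δ')
    (hδM : ∀ f ∈ ω, δ * ‖f‖ < δ')
    (That : ↥F →ₗ[ℂ] ↥F) (K : ℕ) (hK : 1 ≤ K)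
    (hsh : ∀ (f : ↥F) (k : ℕ), k < K → ‖(((That ^ k) f : ↥F) : H) - (T ^ k) (f : H)‖
      ≤ δ * ‖(f : H)‖) :
    haprδ (⇑T) (↑ω) δ' ≤ (Module.finrank ℂ ↥F : ℝ) / K := by
  set d := Module.finrank ℂ ↥F with hd
  -- pointwise bound on Hapr
  have key : ∀ j : ℕ, Hapr (⋃ k < j, (⇑T)^[k] '' ↑ω) δ' ≤ (j / K + 1) * d := by
    intro j
    obtain ⟨E, hfd, hrk, hle⟩ := exists_chain T F K (j / K + 1)
    refine le_trans (Nat.sInf_le ?_) hrk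
    refine ⟨E, hfd, rfl, ?_⟩
    intro x hx
    simp only [Set.mem_iUnion, Set.mem_image] at hx
    obtain ⟨k, hk, w, hw, rfl⟩ := hx
    have hwF : w ∈ F := hsub hw
    set q := k / K with hq
    set r := k % K with hr
    have hrK : r < K := Nat.mod_lt _ (by omega)
    have hqlt : q < j / K + 1 := Nat.lt_succ_of_le (Nat.div_le_div_right hk.le)
    set c : H := (((That ^ r) ⟨w, hwF⟩ : ↥F) : H)
    refine ⟨(T ^ (q * K)) c, hle q hqlt ⟨c, ((That ^ r) ⟨w, hwF⟩).2, rfl⟩, ?_⟩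
    have hxw : (⇑T)^[k] w = (T ^ (q * K)) ((T ^ r) w) := by
      have hqrk : q * K + r = k := by
        rw [hq, hr, Nat.mul_comm]
        exact Nat.div_add_mod k K
      rw [← ContinuousLinearMap.coe_pow', ← ContinuousLinearMap.mul_apply, ← pow_add, hqrk]
    rw [hxw, ← map_sub, him]
    calc ‖(T ^ r) w - c‖ = ‖c - (T ^ r) w‖ := norm_sub_rev _ _
      _ ≤ δ * ‖w‖ := hsh ⟨w, hwF⟩ r hrK
      _ < δ' := hδM w hw
  -- limsup bound
  have hKpos : (0 : ℝ) < K := by exact_mod_cast hK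
  have hdnn : (0 : ℝ) ≤ d := Nat.cast_nonneg d
  have hub : ∀ j : ℕ, 1 ≤ j →
      (Hapr (⋃ k < j, (⇑T)^[k] '' (↑ω : Set H)) δ' : ℝ) / j ≤ (d : ℝ) / K + (d : ℝ) / j := by
    intro j hj
    have hjpos : (0 : ℝ) < j := by exact_mod_cast hj
    have h1 : (Hapr (⋃ k < j, (⇑T)^[k] '' (↑ω : Set H)) δ' : ℝ) ≤ ((j / K + 1 : ℕ) : ℝ) * d := by
      exact_mod_cast Nat.cast_le.mpr (key j)
    have h2 : ((j / K : ℕ) : ℝ) ≤ (j : ℝ) / K := Nat.cast_div_le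
    have h3 : ((j / K + 1 : ℕ) : ℝ) * d ≤ ((j : ℝ) / K + 1) * d := by
      apply mul_le_mul_of_nonneg_right _ hdnn
      push_cast
      linarith
    have h4 : (((j : ℝ) / K + 1) * d) / j = (d : ℝ) / K + (d : ℝ) / j := by
      field_simp
    calc (Hapr (⋃ k < j, (⇑T)^[k] '' (↑ω : Set H)) δ' : ℝ) / j
        ≤ (((j : ℝ) / K + 1) * d) / j := by
          gcongr
          exact h1.trans h3
      _ = (d : ℝ) / K + (d : ℝ) / j := h4
  have hcob : Filter.IsCoboundedUnder (· ≤ ·) Filter.atTop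
      (fun n : ℕ => (Hapr (⋃ k < n, (⇑T)^[k] '' (↑ω : Set H)) δ' : ℝ) / n) := by
    apply Filter.isCoboundedUnder_le_of_le Filter.atTop (x := 0)
    intro j
    positivity
  have hlim : ∀ γ : ℝ, 0 < γ → haprδ (⇑T) (↑ω) δ' ≤ (d : ℝ) / K + γ := by
    intro γ hγ
    apply Filter.limsup_le_of_le hcob
    have hN : ∃ N : ℕ, 1 ≤ N ∧ (d : ℝ) / γ ≤ N := by
      obtain ⟨N, hN⟩ := exists_nat_ge ((d : ℝ) / γ)
      exact ⟨N + 1, by omega, hN.trans (by exact_mod_cast Nat.le_succ N)⟩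
    obtain ⟨N, hN1, hNd⟩ := hN
    rw [Filter.eventually_atTop]
    refine ⟨N, fun j hj => ?_⟩
    have hj1 : 1 ≤ j := le_trans hN1 hj
    have hjpos : (0 : ℝ) < j := by exact_mod_cast hj1
    have : (d : ℝ) / j ≤ γ := by
      rw [div_le_iff₀ hjpos]
      calc (d : ℝ) ≤ γ * N := by
            rw [div_le_iff₀ hγ] at hNd
            linarith [hNd]
      _ ≤ γ * j := by
            apply mul_le_mul_of_nonneg_left _ hγ.le
            exact_mod_cast hj
    exact (hub j hj1).trans (by linarith)
  have : haprδ (⇑T) (↑ω) δ' ≤ (d : ℝ) / K := by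
    apply le_of_forall_pos_le_add
    intro γ hγ
    exact hlim γ hγ
  exact this

end AuxLemmas

/-- Let `(X, Σ, μ)` be a probability space, `φ : X → X` an invertible
measure-preserving map with (unitary) Koopman operator `T = T_φ` on `L²(X)`, let `F ⊆ L²(X)`
be a finite-dimensional subspace and `ε > 0`. Then there exist `K₀ ∈ ℕ` and `δ > 0` such
that: whenever `T̂ : F → F` is linear and `K ≥ K₀` satisfies `‖T̂^k f - T^k f‖₂ ≤ δ ‖f‖₂` for
all `f ∈ F` and `k ∈ {0, …, K-1}`, then `dim F ≥ K (h_apr(T_φ, F) - ε)`. -/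
theorem stmt1 {X : Type*} [MeasurableSpace X] (μ : Measure X) [IsProbabilityMeasure μ]
    (φ : X → X) (hφ : MeasurePreserving φ μ μ)
    (hinv : ∃ ψ : X → X, MeasurePreserving ψ μ μ ∧
      (∀ᵐ x ∂μ, ψ (φ x) = x) ∧ (∀ᵐ x ∂μ, φ (ψ x) = x))
    (T : Lp ℂ 2 μ →L[ℂ] Lp ℂ 2 μ)
    (hT : ∀ f : Lp ℂ 2 μ, (T f : X → ℂ) =ᵐ[μ] (f : X → ℂ) ∘ φ)
    (F : Submodule ℂ (Lp ℂ 2 μ)) [FiniteDimensional ℂ ↥F] (ε : ℝ) (hε : 0 < ε) :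
    ∃ (K₀ : ℕ) (δ : ℝ), 0 < δ ∧
      ∀ (That : ↥F →ₗ[ℂ] ↥F) (K : ℕ), K₀ ≤ K →
        (∀ (f : ↥F) (k : ℕ), k < K →
          ‖(((That ^ k) f : ↥F) : Lp ℂ 2 μ) - (T ^ k) (f : Lp ℂ 2 μ)‖
            ≤ δ * ‖(f : Lp ℂ 2 μ)‖) →
        (K : ℝ) * (haprSub (⇑T) F - ε) ≤ (Module.finrank ℂ ↥F : ℝ) := by
  -- `T` is an isometry, hence so are its powers
  have hiso : ∀ u : Lp ℂ 2 μ, ‖T u‖ = ‖u‖ := by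
    intro u
    rw [Lp.norm_def, Lp.norm_def]
    congr 1
    calc eLpNorm (T u) 2 μ = eLpNorm ((u : X → ℂ) ∘ φ) 2 μ := eLpNorm_congr_ae (hT u)
      _ = eLpNorm (u : X → ℂ) 2 μ :=
        eLpNorm_comp_measurePreserving (Lp.aestronglyMeasurable u) hφ
  have him : ∀ (m : ℕ) (u : Lp ℂ 2 μ), ‖(T ^ m) u‖ = ‖u‖ := by
    intro m
    induction m with
    | zero => intro u; simp
    | succ m ih =>
      intro u
      rw [pow_succ, ContinuousLinearMap.mul_apply, ih (T u), hiso u]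
  by_cases hcase : haprSub (⇑T) F - ε ≤ 0
  · refine ⟨1, 1, one_pos, fun That K hK hsh => ?_⟩
    have : (K : ℝ) * (haprSub (⇑T) F - ε) ≤ 0 :=
      mul_nonpos_of_nonneg_of_nonpos (Nat.cast_nonneg K) hcase
    exact this.trans (Nat.cast_nonneg _)
  · push_neg at hcase
    have h1 : haprSub (⇑T) F - ε <
        ⨆ (ω : Finset (Lp ℂ 2 μ)) (_ : (ω : Set (Lp ℂ 2 μ)) ⊆ (F : Set (Lp ℂ 2 μ))),
          haprω (⇑T) (ω : Set (Lp ℂ 2 μ)) := by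
      have : haprSub (⇑T) F - ε < haprSub (⇑T) F := by linarith
      exact this
    obtain ⟨ω, hω⟩ := exists_lt_of_lt_ciSup h1
    have hsub : (ω : Set (Lp ℂ 2 μ)) ⊆ (F : Set (Lp ℂ 2 μ)) := by
      by_contra hn
      haveI : IsEmpty ((ω : Set (Lp ℂ 2 μ)) ⊆ (F : Set (Lp ℂ 2 μ))) := ⟨hn⟩
      rw [Real.iSup_of_isEmpty] at hω
      linarith
    haveI : Nonempty ((ω : Set (Lp ℂ 2 μ)) ⊆ (F : Set (Lp ℂ 2 μ))) := ⟨hsub⟩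
    rw [ciSup_const] at hω
    have hω' : haprSub (⇑T) F - ε <
        ⨆ (δ' : ℝ) (_ : 0 < δ'), haprδ (⇑T) (ω : Set (Lp ℂ 2 μ)) δ' := hω
    obtain ⟨δ', hδ'⟩ := exists_lt_of_lt_ciSup hω'
    have hδ'pos : 0 < δ' := by
      by_contra hn
      haveI : IsEmpty (0 < δ') := ⟨hn⟩
      rw [Real.iSup_of_isEmpty] at hδ'
      linarith
    haveI : Nonempty (0 < δ') := ⟨hδ'pos⟩
    rw [ciSup_const] at hδ'
    -- choose δ
    set M : ℝ := ∑ f ∈ ω, ‖f‖ with hM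
    have hM0 : 0 ≤ M := Finset.sum_nonneg fun f _ => norm_nonneg f
    have hMf : ∀ f ∈ ω, ‖f‖ ≤ M := fun f hf =>
      Finset.single_le_sum (fun g _ => norm_nonneg g) hf
    set δ : ℝ := δ' / (M + 1) with hδdef
    have hδpos : 0 < δ := div_pos hδ'pos (by linarith)
    refine ⟨1, δ, hδpos, fun That K hK hsh => ?_⟩
    have hδM : ∀ f ∈ ω, δ * ‖f‖ < δ' := by
      intro f hf
      have h2 : δ * ‖f‖ ≤ δ * M := mul_le_mul_of_nonneg_left (hMf f hf) hδpos.le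
      have hlt : δ * M < δ' := by
        rw [hδdef, div_mul_eq_mul_div, div_lt_iff₀ (by linarith : (0:ℝ) < M + 1)]
        nlinarith
      linarith
    have hcore := core T him F ω hsub δ δ' hδ'pos hδM That K hK hsh
    have hlt : haprSub (⇑T) F - ε < (Module.finrank ℂ ↥F : ℝ) / K :=
      lt_of_lt_of_le hδ' hcore
    have hKpos : (0 : ℝ) < K := by exact_mod_cast hK
    calc (K : ℝ) * (haprSub (⇑T) F - ε)
        ≤ (K : ℝ) * ((Module.finrank ℂ ↥F : ℝ) / K) := by
          apply mul_le_mul_of_nonneg_left hlt.le hKpos.le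
      _ = (Module.finrank ℂ ↥F : ℝ) := by field_simp
end

section
/- Let (X, Σ, μ) be a probability space, let φ : X → X be an invertible measure-preserving map, let F ⊆ L²(X) be a finite-dimensional linear subspace and let ε > 0. Then there exist K₀ ∈ ℕ and δ > 0 such that: whenever n ∈ ℕ, T̂ₙ : Fₙ → Fₙ is a linear operator on the n-th delay subspace Fₙ, and K ≥ K₀ is such that ‖T̂ₙ^k f − T_φ^k f‖₂ ≤ δ‖f‖₂ holds for all f ∈ Fₙ and all k ∈ {0, …, K−1}, then dim(Fₙ) ≥ K (h_apr(T_φ, F) − ε). -/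
open MeasureTheory

/-- The `n`-th delay subspace `Fₙ = span ⋃_{k=0}^{n} T^k F`. -/
noncomputable def delaySub {H : Type*} [NormedAddCommGroup H] [InnerProductSpace ℂ H]
    (T : H → H) (F : Submodule ℂ H) (n : ℕ) : Submodule ℂ H :=
  Submodule.span ℂ (⋃ k ≤ n, T^[k] '' (F : Set H))

section Aux
variable {H : Type*} [NormedAddCommGroup H] [InnerProductSpace ℂ H]

lemma Hapr_le' {ω : Set H} {δ : ℝ} (G : Submodule ℂ H) (hfin : FiniteDimensional ℂ G)
    (h : ∀ x ∈ ω, ∃ y ∈ G, ‖x - y‖ < δ) : Hapr ω δ ≤ Module.finrank ℂ G :=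
  Nat.sInf_le ⟨G, hfin, rfl, h⟩

lemma aux_biSup_range (p : ℕ → Submodule ℂ H) [inst : ∀ i, FiniteDimensional ℂ (p i)] (d : ℕ)
    (hd : ∀ i, Module.finrank ℂ (p i) ≤ d) (m : ℕ) :
    ∃ _ : FiniteDimensional ℂ ↥(⨆ i ∈ Finset.range m, p i),
      Module.finrank ℂ ↥(⨆ i ∈ Finset.range m, p i) ≤ m * d := by
  induction m with
  | zero =>
    have : (⨆ i ∈ Finset.range 0, p i) = ⊥ := by simp
    rw [this]
    exact ⟨inferInstance, by simp⟩
  | succ m ih =>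
    obtain ⟨fin, hle⟩ := ih
    have hset : (⨆ i ∈ Finset.range (m+1), p i) = (⨆ i ∈ Finset.range m, p i) ⊔ p m := by
      rw [Finset.range_add_one, Finset.iSup_insert, sup_comm]
    rw [hset]
    refine ⟨Submodule.finiteDimensional_sup _ _, ?_⟩
    calc Module.finrank ℂ ↥((⨆ i ∈ Finset.range m, p i) ⊔ p m)
        ≤ Module.finrank ℂ ↥(⨆ i ∈ Finset.range m, p i) + Module.finrank ℂ ↥(p m) := by
          have := Submodule.finrank_sup_add_finrank_inf_eq (⨆ i ∈ Finset.range m, p i) (p m)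
          omega
      _ ≤ m * d + d := Nat.add_le_add hle (hd m)
      _ = (m+1) * d := by ring

lemma pow_apply_eq_iterate_clm (T : H →L[ℂ] H) (k : ℕ) (x : H) : (⇑T)^[k] x = (T ^ k) x := by
  induction k with
  | zero => simp
  | succ k ih => rw [Function.iterate_succ_apply', ih, pow_succ', ContinuousLinearMap.mul_apply]

lemma delaySub_eq (T : H →L[ℂ] H) (F : Submodule ℂ H) (n : ℕ) :
    delaySub (⇑T) F n = ⨆ k ∈ Finset.range (n+1), Submodule.map ((T ^ k : H →L[ℂ] H) : H →ₗ[ℂ] H) F := by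
  rw [delaySub]
  have h1 : (⋃ k ≤ n, (⇑T)^[k] '' (F : Set H)) = ⋃ k ≤ n, ⇑(T ^ k) '' (F : Set H) := by
    refine Set.iUnion₂_congr fun k _ => ?_
    ext x; simp only [Set.mem_image]
    constructor <;> rintro ⟨y, hy, rfl⟩ <;> exact ⟨y, hy, by rw [← pow_apply_eq_iterate_clm]⟩
  rw [h1, Submodule.span_iUnion₂]
  simp only [Finset.mem_range, Nat.lt_succ_iff]
  refine iSup_congr fun k => iSup_congr fun _ => ?_
  rw [← ContinuousLinearMap.coe_coe, Submodule.span_image, Submodule.span_eq]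

end Aux
lemma map_clm_fd {H : Type*} [NormedAddCommGroup H] [InnerProductSpace ℂ H]
    (f : H →L[ℂ] H) (p : Submodule ℂ H) [FiniteDimensional ℂ p] :
    FiniteDimensional ℂ ↥(Submodule.map (f : H →ₗ[ℂ] H) p) := by
  have : Submodule.map (f : H →ₗ[ℂ] H) p = Submodule.map (f : H →ₗ[ℂ] H) p := rfl
  rw [this]; infer_instance

lemma map_clm_finrank_le {H : Type*} [NormedAddCommGroup H] [InnerProductSpace ℂ H]
    (f : H →L[ℂ] H) (p : Submodule ℂ H) [FiniteDimensional ℂ p] :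
    Module.finrank ℂ ↥(Submodule.map (f : H →ₗ[ℂ] H) p) ≤ Module.finrank ℂ p := by
  have : Submodule.map (f : H →ₗ[ℂ] H) p = Submodule.map (f : H →ₗ[ℂ] H) p := rfl
  rw [this]; exact Submodule.finrank_map_le _ _


/-- Let `(X, Σ, μ)` be a probability space, `φ : X → X` an invertible
measure-preserving map with (unitary) Koopman operator `T = T_φ` on `L²(X)`, let `F ⊆ L²(X)`
be a finite-dimensional subspace and `ε > 0`. Then there exist `K₀ ∈ ℕ` and `δ > 0` such
that: whenever `n ∈ ℕ`, `T̂ₙ : Fₙ → Fₙ` is a linear operator on the `n`-th delay subspace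
`Fₙ = span ⋃_{k=0}^{n} T_φ^k F` and `K ≥ K₀` satisfies `‖T̂ₙ^k f - T_φ^k f‖₂ ≤ δ ‖f‖₂`
for all `f ∈ Fₙ` and `k ∈ {0, …, K-1}`, then `dim Fₙ ≥ K (h_apr(T_φ, F) - ε)`. -/
theorem stmt2 {X : Type*} [MeasurableSpace X] (μ : Measure X) [IsProbabilityMeasure μ]
    (φ : X → X) (hφ : MeasurePreserving φ μ μ)
    (hinv : ∃ ψ : X → X, MeasurePreserving ψ μ μ ∧
      (∀ᵐ x ∂μ, ψ (φ x) = x) ∧ (∀ᵐ x ∂μ, φ (ψ x) = x))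
    (T : Lp ℂ 2 μ →L[ℂ] Lp ℂ 2 μ)
    (hT : ∀ f : Lp ℂ 2 μ, (T f : X → ℂ) =ᵐ[μ] (f : X → ℂ) ∘ φ)
    (F : Submodule ℂ (Lp ℂ 2 μ)) [FiniteDimensional ℂ ↥F] (ε : ℝ) (hε : 0 < ε) :
    ∃ (K₀ : ℕ) (δ : ℝ), 0 < δ ∧
      ∀ (n : ℕ) (Tn : ↥(delaySub (⇑T) F n) →ₗ[ℂ] ↥(delaySub (⇑T) F n)) (K : ℕ), K₀ ≤ K →
        (∀ (f : ↥(delaySub (⇑T) F n)) (k : ℕ), k < K →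
          ‖(((Tn ^ k) f : ↥(delaySub (⇑T) F n)) : Lp ℂ 2 μ) - (T ^ k) (f : Lp ℂ 2 μ)‖
            ≤ δ * ‖(f : Lp ℂ 2 μ)‖) →
        (K : ℝ) * (haprSub (⇑T) F - ε)
          ≤ (Module.finrank ℂ ↥(delaySub (⇑T) F n) : ℝ) := by
  have hTiso : ∀ f : Lp ℂ 2 μ, ‖T f‖ = ‖f‖ := by
    intro f
    rw [Lp.norm_def, Lp.norm_def]
    congr 1
    calc eLpNorm (T f) 2 μ = eLpNorm ((f : X → ℂ) ∘ φ) 2 μ := eLpNorm_congr_ae (hT f)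
      _ = eLpNorm (f : X → ℂ) 2 μ :=
        eLpNorm_comp_measurePreserving (Lp.aestronglyMeasurable f) hφ
  have hTpow : ∀ (k : ℕ) (f : Lp ℂ 2 μ), ‖(T ^ k) f‖ = ‖f‖ := by
    intro k f
    induction k with
    | zero => simp
    | succ k ih => rw [pow_succ', ContinuousLinearMap.mul_apply, hTiso, ih]
  by_cases hcase : haprSub (⇑T) F ≤ ε
  · refine ⟨1, 1, one_pos, fun n Tn K _ _ => ?_⟩
    have h1 : (K : ℝ) * (haprSub (⇑T) F - ε) ≤ 0 :=
      mul_nonpos_of_nonneg_of_nonpos (Nat.cast_nonneg K) (by linarith)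
    exact h1.trans (Nat.cast_nonneg _)
  push_neg at hcase
  have hlt : haprSub (⇑T) F - ε <
      ⨆ (ω : Finset (Lp ℂ 2 μ)) (_ : (ω : Set (Lp ℂ 2 μ)) ⊆ (F : Set (Lp ℂ 2 μ))),
        haprω (⇑T) (ω : Set (Lp ℂ 2 μ)) := by
    rw [← haprSub]; linarith
  obtain ⟨ω, hω⟩ := exists_lt_of_lt_ciSup hlt
  have hεpos : (0:ℝ) < haprSub (⇑T) F - ε := by linarith
  by_cases hsub : (ω : Set (Lp ℂ 2 μ)) ⊆ (F : Set (Lp ℂ 2 μ))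
  swap
  · exfalso
    haveI : IsEmpty ((ω : Set (Lp ℂ 2 μ)) ⊆ (F : Set (Lp ℂ 2 μ))) := ⟨fun hc => hsub hc⟩
    rw [Real.iSup_of_isEmpty] at hω
    linarith
  rw [ciSup_pos hsub, haprω] at hω
  obtain ⟨δ', hδ'⟩ := exists_lt_of_lt_ciSup hω
  by_cases hδpos : 0 < δ'
  swap
  · exfalso
    haveI : IsEmpty (0 < δ') := ⟨fun hc => hδpos hc⟩
    rw [Real.iSup_of_isEmpty] at hδ'
    linarith
  rw [ciSup_pos hδpos] at hδ'
  set M : ℝ := ∑ f ∈ ω, ‖f‖ with hM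
  have hM0 : 0 ≤ M := Finset.sum_nonneg fun f _ => norm_nonneg f
  have hMf : ∀ f ∈ ω, ‖f‖ ≤ M :=
    fun f hf => Finset.single_le_sum (fun g _ => norm_nonneg g) hf
  have hδq : 0 < δ' / (M + 1) := div_pos hδpos (by linarith)
  refine ⟨1, δ' / (M + 1), hδq, ?_⟩
  intro n Tn K hK hyp
  haveI hinstmap : ∀ k : ℕ, FiniteDimensional ℂ ↥(Submodule.map ((T ^ k : Lp ℂ 2 μ →L[ℂ] Lp ℂ 2 μ) : Lp ℂ 2 μ →ₗ[ℂ] Lp ℂ 2 μ) F) :=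
    fun k => map_clm_fd _ _
  obtain ⟨hFnfin, -⟩ := aux_biSup_range (fun k => Submodule.map ((T ^ k : Lp ℂ 2 μ →L[ℂ] Lp ℂ 2 μ) : Lp ℂ 2 μ →ₗ[ℂ] Lp ℂ 2 μ) F)
    (Module.finrank ℂ F) (fun k => map_clm_finrank_le _ _) (n+1)
  rw [← delaySub_eq] at hFnfin
  haveI : FiniteDimensional ℂ ↥(delaySub (⇑T) F n) := hFnfin
  have hKpos : 0 < K := hK
  have hFFn : (F : Set (Lp ℂ 2 μ)) ⊆ ((delaySub (⇑T) F n : Submodule ℂ (Lp ℂ 2 μ)) :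
      Set (Lp ℂ 2 μ)) := by
    intro f hf
    apply Submodule.subset_span
    exact Set.mem_iUnion₂.2 ⟨0, Nat.zero_le n, by simpa using hf⟩
  have hbase : ∀ f ∈ ω, ∀ k < K, ∃ y ∈ delaySub (⇑T) F n, ‖(T ^ k) f - y‖ < δ' := by
    intro f hf k hk
    have hfFn : f ∈ delaySub (⇑T) F n := hFFn (hsub hf)
    refine ⟨(((Tn ^ k) ⟨f, hfFn⟩ : ↥(delaySub (⇑T) F n)) : Lp ℂ 2 μ),
      ((Tn ^ k) ⟨f, hfFn⟩).2, ?_⟩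
    rw [norm_sub_rev]
    calc ‖(((Tn ^ k) ⟨f, hfFn⟩ : ↥(delaySub (⇑T) F n)) : Lp ℂ 2 μ) - (T ^ k) f‖
        ≤ δ' / (M + 1) * ‖f‖ := hyp ⟨f, hfFn⟩ k hk
      _ ≤ δ' / (M + 1) * M := mul_le_mul_of_nonneg_left (hMf f hf) (le_of_lt hδq)
      _ = δ' * (M / (M+1)) := by ring
      _ < δ' * 1 := by
          apply mul_lt_mul_of_pos_left _ hδpos
          rw [div_lt_one (by linarith)]; linarith
      _ = δ' := mul_one δ'
  set d := Module.finrank ℂ ↥(delaySub (⇑T) F n) with hd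
  have hGm : ∀ m N : ℕ, N ≤ m * K →
      (Hapr (⋃ k < N, (⇑T)^[k] '' (ω : Set (Lp ℂ 2 μ))) δ') ≤ m * d := by
    intro m N hNm
    haveI : ∀ j : ℕ, FiniteDimensional ℂ ↥(Submodule.map ((T ^ (j * K) : Lp ℂ 2 μ →L[ℂ] Lp ℂ 2 μ) : Lp ℂ 2 μ →ₗ[ℂ] Lp ℂ 2 μ) (delaySub (⇑T) F n)) :=
      fun j => map_clm_fd _ _
    obtain ⟨hGfin, hGle⟩ := aux_biSup_range
      (fun j => Submodule.map ((T ^ (j * K) : Lp ℂ 2 μ →L[ℂ] Lp ℂ 2 μ) : Lp ℂ 2 μ →ₗ[ℂ] Lp ℂ 2 μ) (delaySub (⇑T) F n)) d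
      (fun j => map_clm_finrank_le _ _) m
    refine le_trans (Hapr_le' _ hGfin ?_) hGle
    rintro x hx
    simp only [Set.mem_iUnion, Set.mem_image] at hx
    obtain ⟨k, hkN, f, hf, rfl⟩ := hx
    have hkm : k < m * K := lt_of_lt_of_le hkN hNm
    obtain ⟨y₀, hy₀Fn, hy₀⟩ := hbase f hf (k % K) (Nat.mod_lt _ hKpos)
    refine ⟨(T ^ (k / K * K)) y₀, ?_, ?_⟩
    · apply Submodule.mem_iSup_of_mem (k / K)
      apply Submodule.mem_iSup_of_mem
      · exact Submodule.mem_map_of_mem hy₀Fn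
      · exact Finset.mem_range.2 ((Nat.div_lt_iff_lt_mul hKpos).2 hkm)
    · have hxeq : (⇑T)^[k] f = (T ^ (k / K * K)) ((T ^ (k % K)) f) := by
        have hk' : k / K * K + k % K = k := Nat.div_add_mod' k K
        rw [pow_apply_eq_iterate_clm, ← ContinuousLinearMap.mul_apply, ← pow_add, hk']
      rw [hxeq, ← map_sub, hTpow]
      exact hy₀
  have hlimsup : haprδ (⇑T) (ω : Set (Lp ℂ 2 μ)) δ' ≤ (d : ℝ) / K := by
    rw [haprδ]
    have hnonneg : ∀ N : ℕ,
        (0:ℝ) ≤ (Hapr (⋃ k < N, (⇑T)^[k] '' (ω : Set (Lp ℂ 2 μ))) δ' : ℝ) / N :=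
      fun N => by positivity
    refine le_of_forall_pos_le_add fun η hη => ?_
    refine Filter.limsup_le_of_le (Filter.isCoboundedUnder_le_of_le _ hnonneg) ?_
    filter_upwards [Filter.eventually_ge_atTop (max 1 ⌈(d : ℝ) / η⌉₊)] with N hN
    have hN1 : 1 ≤ N := le_trans (le_max_left _ _) hN
    have hNpos : (0:ℝ) < N := by exact_mod_cast hN1
    have hKR : (0:ℝ) < K := by exact_mod_cast hKpos
    have hNd : (d : ℝ) / N ≤ η := by
      rw [div_le_iff₀ hNpos, mul_comm]
      have h3 : (d : ℝ) / η ≤ N :=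
        le_trans (Nat.le_ceil _) (Nat.cast_le.2 (le_trans (le_max_right _ _) hN))
      calc (d : ℝ) = (d / η) * η := by field_simp
        _ ≤ N * η := mul_le_mul_of_nonneg_right h3 (le_of_lt hη)
    have hNle : N ≤ (N / K + 1) * K := by
      have h4 := Nat.div_add_mod N K
      have h5 : N % K < K := Nat.mod_lt _ hKpos
      calc N = K * (N / K) + N % K := (Nat.div_add_mod N K).symm
        _ ≤ K * (N / K) + K := by omega
        _ = (N / K + 1) * K := by ring
    have hHN := hGm (N / K + 1) N hNle
    have hcast : ((N / K : ℕ) : ℝ) ≤ (N : ℝ) / (K : ℝ) := Nat.cast_div_le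
    have hkey : ((N : ℝ)/K + 1) * d / N = (d:ℝ)/K + (d:ℝ)/N := by
      field_simp
    calc (Hapr (⋃ k < N, (⇑T)^[k] '' (ω : Set (Lp ℂ 2 μ))) δ' : ℝ) / N
        ≤ (((N / K + 1) * d : ℕ) : ℝ) / N := by gcongr <;> exact_mod_cast hHN
      _ ≤ ((N : ℝ)/K + 1) * d / N := by
          push_cast
          gcongr
      _ = (d:ℝ)/K + (d:ℝ)/N := hkey
      _ ≤ (d:ℝ)/K + η := by linarith
  have hfinal : haprSub (⇑T) F - ε < (d : ℝ) / K := lt_of_lt_of_le hδ' hlimsup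
  have hKR : (0:ℝ) < K := Nat.cast_pos.2 hKpos
  calc (K : ℝ) * (haprSub (⇑T) F - ε) ≤ (K : ℝ) * ((d : ℝ) / K) :=
    mul_le_mul_of_nonneg_left (le_of_lt hfinal) (le_of_lt hKR)
    _ = d := by field_simp
end

section
/- Let H be a Hilbert space, let T : H → H be a unitary operator, let F ⊆ H be a finite-dimensional linear subspace and let ε > 0. Then there exist K₀ ∈ ℕ and δ > 0 such that: whenever n ∈ ℕ, T̂ₙ : Fₙ → Fₙ is a linear operator on the n-th delay subspace Fₙ, and K ≥ K₀ is such that ‖T̂ₙ^k x − T^k x‖ ≤ δ‖x‖ holds for all x ∈ Fₙ and all k ∈ {0, …, K−1}, then dim(Fₙ) ≥ K (h_apr(T, F) − ε). -/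
open MeasureTheory

section Aux

variable {H : Type*} [NormedAddCommGroup H] [InnerProductSpace ℂ H]

private lemma iter_eq (T : H ≃ₗᵢ[ℂ] H) (k : ℕ) (x : H) :
    (⇑T)^[k] x = ((T.toLinearEquiv : H →ₗ[ℂ] H) ^ k) x := by
  rw [Module.End.pow_apply]; rfl

private lemma norm_iter (T : H ≃ₗᵢ[ℂ] H) (k : ℕ) (x : H) :
    ‖(⇑T)^[k] x‖ = ‖x‖ := by
  induction k with
  | zero => rfl
  | succ k ih => rw [Function.iterate_succ_apply', T.norm_map, ih]

private lemma finrank_finset_sup_le {ι : Type*} (s : Finset ι) (f : ι → Submodule ℂ H)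
    [∀ i, FiniteDimensional ℂ ↥(f i)] (d : ℕ) (h : ∀ i ∈ s, Module.finrank ℂ ↥(f i) ≤ d) :
    Module.finrank ℂ ↥(s.sup f) ≤ s.card * d := by
  classical
  induction s using Finset.cons_induction with
  | empty => simp
  | cons a s ha ih =>
    rw [Finset.sup_cons, Finset.card_cons]
    haveI : FiniteDimensional ℂ ↥(s.sup f) := Submodule.finiteDimensional_finset_sup s f
    have h1 : Module.finrank ℂ ↥(f a ⊔ s.sup f)
        ≤ Module.finrank ℂ ↥(f a) + Module.finrank ℂ ↥(s.sup f) := by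
      have := Submodule.finrank_sup_add_finrank_inf_eq (f a) (s.sup f)
      omega
    have h2 := ih (fun i hi => h i (Finset.mem_cons_of_mem hi))
    have h3 := h a (Finset.mem_cons_self a s)
    calc Module.finrank ℂ ↥(f a ⊔ s.sup f) ≤ d + s.card * d := by omega
    _ = (s.card + 1) * d := by ring

private lemma delaySub_fd (T : H ≃ₗᵢ[ℂ] H) (F : Submodule ℂ H) [FiniteDimensional ℂ ↥F]
    (n : ℕ) : FiniteDimensional ℂ ↥(delaySub (⇑T) F n) := by
  set Tl : H →ₗ[ℂ] H := (T.toLinearEquiv : H →ₗ[ℂ] H)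
  haveI : ∀ k : ℕ, FiniteDimensional ℂ ↥(F.map (Tl ^ k)) :=
    fun k => Module.Finite.map F (Tl ^ k)
  apply Submodule.finiteDimensional_of_le
    (S₂ := (Finset.range (n + 1)).sup fun k => F.map (Tl ^ k))
  rw [delaySub, Submodule.span_le]
  intro x hx
  simp only [Set.mem_iUnion, Set.mem_image] at hx
  obtain ⟨k, hk, y, hy, rfl⟩ := hx
  have : (⇑T)^[k] y ∈ F.map (Tl ^ k) := ⟨y, hy, (iter_eq T k y).symm⟩
  exact SetLike.le_def.mp (Finset.le_sup (f := fun k => F.map (Tl ^ k))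
    (Finset.mem_range.2 (Nat.lt_succ_of_le hk))) this

end Aux

/-- Let `T` be a unitary operator on a Hilbert space `H`, `F ⊆ H` a
finite-dimensional subspace and `ε > 0`. Then there exist `K₀ ∈ ℕ` and `δ > 0` such that:
whenever `n ∈ ℕ`, `T̂ₙ : Fₙ → Fₙ` is a linear operator on the `n`-th delay subspace `Fₙ` and
`K ≥ K₀` satisfies `‖T̂ₙ^k x - T^k x‖ ≤ δ ‖x‖` for all `x ∈ Fₙ` and `k ∈ {0, …, K-1}`, then
`dim Fₙ ≥ K (h_apr(T, F) - ε)`. -/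
theorem stmt3 {H : Type*} [NormedAddCommGroup H] [InnerProductSpace ℂ H] [CompleteSpace H]
    (T : H ≃ₗᵢ[ℂ] H) (F : Submodule ℂ H) [FiniteDimensional ℂ ↥F] (ε : ℝ) (hε : 0 < ε) :
    ∃ (K₀ : ℕ) (δ : ℝ), 0 < δ ∧
      ∀ (n : ℕ) (Tn : ↥(delaySub (⇑T) F n) →ₗ[ℂ] ↥(delaySub (⇑T) F n)) (K : ℕ), K₀ ≤ K →
        (∀ (x : ↥(delaySub (⇑T) F n)) (k : ℕ), k < K →
          ‖(((Tn ^ k) x : ↥(delaySub (⇑T) F n)) : H) - (⇑T)^[k] (x : H)‖ ≤ δ * ‖(x : H)‖) →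
        (K : ℝ) * (haprSub (⇑T) F - ε) ≤ (Module.finrank ℂ ↥(delaySub (⇑T) F n) : ℝ) := by
  by_cases hle : haprSub ⇑T F ≤ ε
  · refine ⟨1, 1, one_pos, fun n Tn K hK _ => ?_⟩
    have h1 : (K : ℝ) * (haprSub ⇑T F - ε) ≤ 0 :=
      mul_nonpos_of_nonneg_of_nonpos (Nat.cast_nonneg K) (by linarith)
    exact h1.trans (Nat.cast_nonneg _)
  push_neg at hle
  have h0 : haprSub ⇑T F - ε <
      ⨆ (ω : Finset H) (_ : (ω : Set H) ⊆ (F : Set H)), haprω (⇑T) (ω : Set H) := by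
    rw [← haprSub]; linarith
  obtain ⟨ω, hω⟩ := exists_lt_of_lt_ciSup h0
  by_cases hsub : (ω : Set H) ⊆ (F : Set H)
  swap
  · haveI : IsEmpty ((ω : Set H) ⊆ (F : Set H)) := ⟨hsub⟩
    rw [Real.iSup_of_isEmpty] at hω; linarith
  rw [ciSup_pos hsub] at hω
  rw [haprω] at hω
  obtain ⟨δ'', hδω⟩ := exists_lt_of_lt_ciSup hω
  by_cases hδpos : 0 < δ''
  swap
  · haveI : IsEmpty (0 < δ'') := ⟨hδpos⟩
    rw [Real.iSup_of_isEmpty] at hδω; linarith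
  rw [ciSup_pos hδpos] at hδω
  set M : ℝ := ((ω.sup fun y => ‖y‖₊ : NNReal) : ℝ) with hM
  have hM0 : 0 ≤ M := NNReal.coe_nonneg _
  set δ : ℝ := δ'' / (M + 1) with hδdef
  have hδ0 : 0 < δ := div_pos hδpos (by linarith)
  refine ⟨1, δ, hδ0, fun n Tn K hK happrox => ?_⟩
  haveI : FiniteDimensional ℂ ↥(delaySub (⇑T) F n) := delaySub_fd T F n
  have hK0 : 0 < K := hK
  have hFsub : F ≤ delaySub (⇑T) F n := by
    rw [delaySub]
    intro x hx
    apply Submodule.subset_span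
    exact Set.mem_iUnion.2 ⟨0, Set.mem_iUnion.2 ⟨Nat.zero_le n, ⟨x, hx, rfl⟩⟩⟩
  have claimA : ∀ m : ℕ,
      Hapr (⋃ k < m, (⇑T)^[k] '' (ω : Set H)) δ''
        ≤ (m / K + 1) * Module.finrank ℂ ↥(delaySub (⇑T) F n) := by
    intro m
    haveI : ∀ j : ℕ, FiniteDimensional ℂ
        ↥((delaySub (⇑T) F n).map ((T.toLinearEquiv : H →ₗ[ℂ] H) ^ (K * j))) :=
      fun j => Module.Finite.map (delaySub (⇑T) F n) ((T.toLinearEquiv : H →ₗ[ℂ] H) ^ (K * j))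
    haveI : FiniteDimensional ℂ ↥((Finset.range (m / K + 1)).sup
        fun j => (delaySub (⇑T) F n).map ((T.toLinearEquiv : H →ₗ[ℂ] H) ^ (K * j))) :=
      Submodule.finiteDimensional_finset_sup _ _
    have hGrank : Module.finrank ℂ ↥((Finset.range (m / K + 1)).sup
          fun j => (delaySub (⇑T) F n).map ((T.toLinearEquiv : H →ₗ[ℂ] H) ^ (K * j)))
        ≤ (m / K + 1) * Module.finrank ℂ ↥(delaySub (⇑T) F n) := by
      have := finrank_finset_sup_le (Finset.range (m / K + 1))
        (fun j => (delaySub (⇑T) F n).map ((T.toLinearEquiv : H →ₗ[ℂ] H) ^ (K * j)))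
        (Module.finrank ℂ ↥(delaySub (⇑T) F n))
        (fun j _ => Submodule.finrank_map_le _ _)
      simpa [Finset.card_range] using this
    refine le_trans (Nat.sInf_le ?_) hGrank
    refine ⟨_, inferInstance, rfl, ?_⟩
    intro x hx
    simp only [Set.mem_iUnion, Set.mem_image] at hx
    obtain ⟨k, hkm, y, hy, rfl⟩ := hx
    have hyFn : y ∈ delaySub (⇑T) F n := hFsub (hsub hy)
    have hrK : k % K < K := Nat.mod_lt _ hK0
    refine ⟨((T.toLinearEquiv : H →ₗ[ℂ] H) ^ (K * (k / K)))
      (((Tn ^ (k % K)) ⟨y, hyFn⟩ : ↥(delaySub (⇑T) F n)) : H), ?_, ?_⟩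
    · have hjq : k / K ∈ Finset.range (m / K + 1) :=
        Finset.mem_range.2 (Nat.lt_succ_of_le (Nat.div_le_div_right hkm.le))
      exact Finset.le_sup
        (f := fun j => (delaySub (⇑T) F n).map ((T.toLinearEquiv : H →ₗ[ℂ] H) ^ (K * j))) hjq
        ⟨_, ((Tn ^ (k % K)) ⟨y, hyFn⟩).2, rfl⟩
    · have hiter : (⇑T)^[k] y
          = ((T.toLinearEquiv : H →ₗ[ℂ] H) ^ (K * (k / K))) ((⇑T)^[k % K] y) := by
        conv_lhs => rw [← Nat.div_add_mod k K]
        rw [Function.iterate_add_apply, iter_eq]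
      have heq : (⇑T)^[k] y - ((T.toLinearEquiv : H →ₗ[ℂ] H) ^ (K * (k / K)))
            (((Tn ^ (k % K)) ⟨y, hyFn⟩ : ↥(delaySub (⇑T) F n)) : H)
          = ((T.toLinearEquiv : H →ₗ[ℂ] H) ^ (K * (k / K)))
            ((⇑T)^[k % K] y - (((Tn ^ (k % K)) ⟨y, hyFn⟩ : ↥(delaySub (⇑T) F n)) : H)) := by
        rw [hiter, ← map_sub]
      rw [heq, ← iter_eq, norm_iter]
      have h1 : ‖(⇑T)^[k % K] y
          - (((Tn ^ (k % K)) ⟨y, hyFn⟩ : ↥(delaySub (⇑T) F n)) : H)‖ ≤ δ * ‖y‖ := by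
        rw [norm_sub_rev]
        exact happrox ⟨y, hyFn⟩ (k % K) hrK
      have hyM : ‖y‖ ≤ M := by
        rw [hM]
        exact_mod_cast Finset.le_sup (f := fun y => ‖y‖₊) hy
      have h2 : δ * ‖y‖ ≤ δ * M := mul_le_mul_of_nonneg_left hyM hδ0.le
      have h3 : δ * M < δ'' := by
        rw [hδdef, div_mul_eq_mul_div, div_lt_iff₀ (by linarith : (0:ℝ) < M + 1)]
        nlinarith
      linarith
  have hKR : (0:ℝ) < K := by exact_mod_cast hK0
  have hd0 : (0:ℝ) ≤ (Module.finrank ℂ ↥(delaySub (⇑T) F n) : ℝ) := Nat.cast_nonneg _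
  have claimB : haprδ (⇑T) (ω : Set H) δ''
      ≤ (Module.finrank ℂ ↥(delaySub (⇑T) F n) : ℝ) / K := by
    have htend : Filter.Tendsto
        (fun m : ℕ => (Module.finrank ℂ ↥(delaySub (⇑T) F n) : ℝ) / K
          + (Module.finrank ℂ ↥(delaySub (⇑T) F n) : ℝ) / m) Filter.atTop
        (nhds ((Module.finrank ℂ ↥(delaySub (⇑T) F n) : ℝ) / K)) := by
      simpa using tendsto_const_nhds.add
        (tendsto_const_div_atTop_nhds_zero_nat (Module.finrank ℂ ↥(delaySub (⇑T) F n) : ℝ))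
    rw [haprδ]
    refine le_trans ?_ (le_of_eq htend.limsup_eq)
    apply Filter.limsup_le_limsup
    · filter_upwards [Filter.eventually_ge_atTop 1] with m hm
      have hm0 : (0:ℝ) < m := by exact_mod_cast hm
      have h1 : ((Hapr (⋃ k < m, (⇑T)^[k] '' (ω : Set H)) δ'' : ℕ) : ℝ)
          ≤ (((m / K + 1) * Module.finrank ℂ ↥(delaySub (⇑T) F n) : ℕ) : ℝ) :=
        Nat.cast_le.2 (claimA m)
      have h2 : ((m / K : ℕ) : ℝ) ≤ (m : ℝ) / K := Nat.cast_div_le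
      rw [div_le_iff₀ hm0]
      push_cast at h1
      have h4 : ((Module.finrank ℂ ↥(delaySub (⇑T) F n) : ℝ) / K
            + (Module.finrank ℂ ↥(delaySub (⇑T) F n) : ℝ) / m) * m
          = (m : ℝ) / K * (Module.finrank ℂ ↥(delaySub (⇑T) F n) : ℝ)
            + (Module.finrank ℂ ↥(delaySub (⇑T) F n) : ℝ) := by
        field_simp
      nlinarith [mul_le_mul_of_nonneg_right h2 hd0]
    · have hb : Filter.IsBoundedUnder (fun x1 x2 : ℝ => x1 ≥ x2) Filter.atTop
          (fun m : ℕ => ((Hapr (⋃ k < m, (⇑T)^[k] '' (ω : Set H)) δ'' : ℕ) : ℝ) / m) :=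
        Filter.isBoundedUnder_of
          ⟨0, fun m => div_nonneg (Nat.cast_nonneg _) (Nat.cast_nonneg _)⟩
      exact hb.isCoboundedUnder_le
    · exact htend.isBoundedUnder_le
  have hfin : haprSub ⇑T F - ε < (Module.finrank ℂ ↥(delaySub (⇑T) F n) : ℝ) / K :=
    lt_of_lt_of_le hδω claimB
  have hmul : (K : ℝ) * (haprSub ⇑T F - ε)
      ≤ (K : ℝ) * ((Module.finrank ℂ ↥(delaySub (⇑T) F n) : ℝ) / K) :=
    mul_le_mul_of_nonneg_left hfin.le (Nat.cast_nonneg K)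
  have hcan : (K : ℝ) * ((Module.finrank ℂ ↥(delaySub (⇑T) F n) : ℝ) / K)
      = (Module.finrank ℂ ↥(delaySub (⇑T) F n) : ℝ) := by
    field_simp
  rw [hcan] at hmul
  exact hmul
end

section
/- Let (X, Σ, μ) be a probability space, let κ ∈ ℕ, p ∈ [1, ∞) and ε > 0. Then there exists δ > 0 such that for any finite Σ-measurable partitions α and β of X with |α| ≤ κ and sup_{A ∈ α} ‖E[1_A | β] − 1_A‖_p < δ, one has H_μ(α | β) < ε. -/
open MeasureTheory ENNReal NNReal

/-- A finite `Σ`-measurable partition of `X`, given as a finite collection of measurable sets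
that are pairwise disjoint and cover `X`. -/
def IsMeasPartition {X : Type*} [MeasurableSpace X] (α : Finset (Set X)) : Prop :=
  (∀ A ∈ α, MeasurableSet A) ∧ ((α : Set (Set X)).PairwiseDisjoint id) ∧
    ⋃ A ∈ α, A = Set.univ

/-- The static entropy `H_μ(α) = ∑_{A ∈ α} -μ(A) log μ(A)` of a finite collection of sets
(sets of measure zero contribute `0`, i.e. are omitted). -/
noncomputable def staticEntropy {X : Type*} [MeasurableSpace X] (μ : MeasureTheory.Measure X)
    (α : Finset (Set X)) : ℝ :=
  ∑ A ∈ α, Real.negMulLog (μ A).toReal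

/-- The conditional expectation `E[f | β] = ∑_{B ∈ β, μ(B) > 0} (1/μ(B)) (∫_B f dμ) · 1_B`
of a function with respect to a finite measurable partition `β` (cells of measure zero are
omitted, since in `ℝ` one has `(0 : ℝ)⁻¹ = 0`). -/
noncomputable def condExpPart {X : Type*} [MeasurableSpace X] (μ : MeasureTheory.Measure X)
    (β : Finset (Set X)) (f : X → ℝ) : X → ℝ :=
  fun x => ∑ B ∈ β, ((μ B).toReal)⁻¹ * (∫ y in B, f y ∂μ) * Set.indicator B 1 x

/-- The common refinement `α ∨ β = {A ∩ B : A ∈ α, B ∈ β}`. -/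
noncomputable def commonRefine {X : Type*} (α β : Finset (Set X)) : Finset (Set X) :=
  @Finset.image _ _ (Classical.decEq _) (fun p : Set X × Set X => p.1 ∩ p.2) (α ×ˢ β)

lemma nML_le_sqrt {c : ℝ} (h0 : 0 ≤ c) (h1 : c ≤ 1) :
    Real.negMulLog c ≤ 2 * Real.sqrt (min c (1 - c)) := by
  rcases eq_or_lt_of_le h0 with rfl | hc
  · simp [Real.negMulLog]
  have key : Real.negMulLog c = c * (-Real.log c) := by
    simp [Real.negMulLog]
  rcases le_or_gt c (1/2) with hle | hgt
  · have hmin : min c (1 - c) = c := min_eq_left (by linarith)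
    rw [hmin]
    have hs : 0 < Real.sqrt c := Real.sqrt_pos.2 hc
    have hlog : Real.log (1 / Real.sqrt c) ≤ 1 / Real.sqrt c - 1 :=
      Real.log_le_sub_one_of_pos (by positivity)
    have h2 : -Real.log c = 2 * Real.log (1 / Real.sqrt c) := by
      rw [Real.log_div one_ne_zero (ne_of_gt hs), Real.log_one, Real.log_sqrt h0]; ring
    rw [key, h2]
    calc c * (2 * Real.log (1 / Real.sqrt c)) ≤ c * (2 * (1 / Real.sqrt c)) := by
          have : Real.log (1 / Real.sqrt c) ≤ 1 / Real.sqrt c := by linarith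
          nlinarith [this, hc]
      _ = 2 * (c / Real.sqrt c) := by ring
      _ = 2 * Real.sqrt c := by rw [Real.div_sqrt]
  · have hmin : min c (1 - c) = 1 - c := min_eq_right (by linarith)
    rw [hmin]
    have hlog : Real.log (1 / c) ≤ 1 / c - 1 := Real.log_le_sub_one_of_pos (by positivity)
    have h2 : -Real.log c = Real.log (1 / c) := by
      rw [Real.log_div one_ne_zero (ne_of_gt hc), Real.log_one]; ring
    have hb : Real.negMulLog c ≤ 1 - c := by
      rw [key, h2]
      calc c * Real.log (1/c) ≤ c * (1/c - 1) := mul_le_mul_of_nonneg_left hlog h0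
        _ = 1 - c := by field_simp
    have hsq : 1 - c ≤ Real.sqrt (1 - c) := by
      nlinarith [Real.sq_sqrt (by linarith : (0:ℝ) ≤ 1 - c),
        Real.sqrt_nonneg (1 - c), Real.sqrt_le_one.2 (by linarith : 1 - c ≤ 1)]
    have hnn : 0 ≤ Real.sqrt (1 - c) := Real.sqrt_nonneg _
    linarith

lemma slice_sum {X : Type*} [MeasurableSpace X] (μ : Measure X) {α : Finset (Set X)}
    (hα : IsMeasPartition α) {B : Set X} (hB : MeasurableSet B) :
    ∑ A ∈ α, μ (A ∩ B) = μ B := by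
  have hd : Set.PairwiseDisjoint (↑α : Set (Set X)) (fun A => A ∩ B) := by
    intro x hx y hy hxy
    exact (hα.2.1 hx hy hxy).mono Set.inter_subset_left Set.inter_subset_left
  rw [← measure_biUnion_finset hd (fun A hA => (hα.1 A hA).inter hB)]
  congr 1
  rw [← Set.iUnion₂_inter, hα.2.2, Set.univ_inter]

lemma part_sum {X : Type*} [MeasurableSpace X] (μ : Measure X) [IsProbabilityMeasure μ]
    {β : Finset (Set X)} (hβ : IsMeasPartition β) : ∑ B ∈ β, μ B = 1 := by
  have h := measure_biUnion_finset (μ := μ) hβ.2.1 hβ.1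
  simp only [id] at h
  rw [hβ.2.2, measure_univ] at h
  exact h.symm

lemma refine_sum {X : Type*} [MeasurableSpace X] (μ : Measure X) (α β : Finset (Set X))
    (hα : (α : Set (Set X)).PairwiseDisjoint id)
    (hβ : (β : Set (Set X)).PairwiseDisjoint id) :
    staticEntropy μ (commonRefine α β)
      = ∑ A ∈ α, ∑ B ∈ β, Real.negMulLog (μ (A ∩ B)).toReal := by
  classical
  set f : Set X × Set X → Set X := fun p => p.1 ∩ p.2 with hf
  set g : Set X → ℝ := fun S => Real.negMulLog (μ S).toReal with hgdef
  have hg0 : g ∅ = 0 := by simp [hgdef, Real.negMulLog]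
  set t : Finset (Set X × Set X) := α ×ˢ β with ht
  set t₁ := t.filter (fun p => f p ≠ ∅) with ht₁
  have hsub : t₁ ⊆ t := Finset.filter_subset _ _
  have h1 : staticEntropy μ (commonRefine α β) = ∑ S ∈ t₁.image f, g S := by
    unfold staticEntropy commonRefine
    rw [show (@Finset.image _ _ (Classical.decEq _) f t : Finset (Set X))
        = t.image f from by congr]
    refine (Finset.sum_subset (Finset.image_subset_image hsub) ?_).symm
    intro S hS hS'
    obtain ⟨q, hq, rfl⟩ := Finset.mem_image.1 hS
    by_cases he : f q = ∅
    · rw [he]; exact hg0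
    · exact absurd (Finset.mem_image_of_mem f (Finset.mem_filter.2 ⟨hq, he⟩)) hS'
  have hinj : ∀ q ∈ t₁, ∀ q' ∈ t₁, f q = f q' → q = q' := by
    rintro ⟨A, B⟩ hq ⟨A', B'⟩ hq' heq
    obtain ⟨hqt, hqne⟩ := Finset.mem_filter.1 hq
    obtain ⟨hqt', _⟩ := Finset.mem_filter.1 hq'
    obtain ⟨hA, hB⟩ := Finset.mem_product.1 hqt
    obtain ⟨hA', hB'⟩ := Finset.mem_product.1 hqt'
    obtain ⟨x, hx⟩ := Set.nonempty_iff_ne_empty.2 hqne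
    simp only [hf] at heq hx
    have hx' : x ∈ A' ∩ B' := heq ▸ hx
    have hAA : A = A' := by
      by_contra hne
      exact Set.disjoint_left.1 (hα hA hA' hne) hx.1 hx'.1
    have hBB : B = B' := by
      by_contra hne
      exact Set.disjoint_left.1 (hβ hB hB' hne) hx.2 hx'.2
    simp [hAA, hBB]
  have h2 : ∑ S ∈ t₁.image f, g S = ∑ q ∈ t₁, g (f q) := Finset.sum_image hinj
  have h3 : ∑ q ∈ t₁, g (f q) = ∑ q ∈ t, g (f q) := by
    refine Finset.sum_subset hsub ?_
    intro q hq hq'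
    have : f q = ∅ := by
      by_contra he
      exact hq' (Finset.mem_filter.2 ⟨hq, he⟩)
    rw [this]; exact hg0
  rw [h1, h2, h3, ht, Finset.sum_product]

lemma entropy_diff {X : Type*} [MeasurableSpace X] (μ : Measure X) [IsProbabilityMeasure μ]
    {α β : Finset (Set X)} (hα : IsMeasPartition α) (hβ : IsMeasPartition β) :
    staticEntropy μ (commonRefine α β) - staticEntropy μ β
      = ∑ B ∈ β, (μ B).toReal *
        ∑ A ∈ α, Real.negMulLog ((μ (A ∩ B)).toReal / (μ B).toReal) := by
  rw [refine_sum μ α β hα.2.1 hβ.2.1, Finset.sum_comm]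
  unfold staticEntropy
  rw [← Finset.sum_sub_distrib]
  refine Finset.sum_congr rfl fun B hB => ?_
  by_cases hw : μ B = 0
  · have hz : ∀ A ∈ α, μ (A ∩ B) = 0 := fun A _ =>
      le_antisymm ((measure_mono Set.inter_subset_right).trans_eq hw) (by simp)
    have h1 : ∑ A ∈ α, Real.negMulLog (μ (A ∩ B)).toReal = 0 :=
      Finset.sum_eq_zero fun A hA => by rw [hz A hA]; simp [Real.negMulLog]
    rw [h1, hw]
    simp [Real.negMulLog]
  · have hwpos : 0 < (μ B).toReal := ENNReal.toReal_pos hw (measure_ne_top μ B)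
    set w := (μ B).toReal with hwdef
    have hsum : ∑ A ∈ α, (μ (A ∩ B)).toReal = w := by
      rw [← ENNReal.toReal_sum (fun A _ => measure_ne_top μ _),
        slice_sum μ hα (hβ.1 B hB)]
    have hterm : ∀ A ∈ α, Real.negMulLog (μ (A ∩ B)).toReal
        = ((μ (A ∩ B)).toReal / w) * Real.negMulLog w
          + w * Real.negMulLog ((μ (A ∩ B)).toReal / w) := by
      intro A _
      have heq : (μ (A ∩ B)).toReal = w * ((μ (A ∩ B)).toReal / w) := by
        field_simp
      conv_lhs => rw [heq]
      rw [Real.negMulLog_mul]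
    rw [Finset.sum_congr rfl hterm, Finset.sum_add_distrib]
    have h2 : ∑ A ∈ α, (μ (A ∩ B)).toReal / w * Real.negMulLog w = Real.negMulLog w := by
      rw [← Finset.sum_mul, ← Finset.sum_div, hsum, div_self hwpos.ne', one_mul]
    rw [h2, ← Finset.mul_sum]
    ring

lemma condExpPart_eq {X : Type*} [MeasurableSpace X] (μ : Measure X)
    {β : Finset (Set X)} (hβd : (β : Set (Set X)).PairwiseDisjoint id)
    {A B : Set X} (hA : MeasurableSet A) (hB : B ∈ β) {x : X} (hx : x ∈ B) :
    condExpPart μ β (Set.indicator A 1) x = (μ (A ∩ B)).toReal / (μ B).toReal := by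
  unfold condExpPart
  rw [Finset.sum_eq_single B]
  · rw [Set.indicator_of_mem hx, Pi.one_apply, mul_one]
    have hint : ∫ y in B, Set.indicator A 1 y ∂μ = (μ (A ∩ B)).toReal := by
      rw [MeasureTheory.setIntegral_indicator hA]
      simp [Set.inter_comm]
      rfl
    rw [hint, inv_mul_eq_div]
  · intro B' hB' hne
    have hx' : x ∉ B' := fun hx' =>
      Set.disjoint_left.1 (hβd (Finset.mem_coe.2 hB') (Finset.mem_coe.2 hB) hne) hx' hx
    simp [Set.indicator_of_notMem hx']
  · intro h; exact absurd hB h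

lemma lp_bound {X : Type*} [MeasurableSpace X] (μ : Measure X) [IsProbabilityMeasure μ]
    {β : Finset (Set X)} (hβ : IsMeasPartition β) {A : Set X} (hA : MeasurableSet A)
    {p δ : ℝ} (hp : 1 ≤ p) (hδ : 0 < δ)
    (h : eLpNorm (condExpPart μ β (Set.indicator A 1) - Set.indicator A 1)
      (ENNReal.ofReal p) μ < ENNReal.ofReal δ) :
    ∑ B ∈ β, (μ B).toReal *
      (min ((μ (A ∩ B)).toReal / (μ B).toReal) (1 - (μ (A ∩ B)).toReal / (μ B).toReal)) ^ p
      ≤ 2 * δ ^ p := by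
  have hp0 : (0:ℝ) < p := lt_of_lt_of_le one_pos hp
  set g := condExpPart μ β (Set.indicator A 1) - Set.indicator A 1 with hg
  have hpne : ENNReal.ofReal p ≠ 0 := by
    simp only [ne_eq, ENNReal.ofReal_eq_zero, not_le]; linarith
  rw [eLpNorm_eq_lintegral_rpow_enorm_toReal hpne ENNReal.ofReal_ne_top,
    ENNReal.toReal_ofReal hp0.le] at h
  set I := ∫⁻ x, (‖g x‖₊ : ℝ≥0∞) ^ p ∂μ with hI
  have hIlt : I ≤ ENNReal.ofReal (δ ^ p) := by
    have h1 : (I ^ (1/p)) ^ p ≤ (ENNReal.ofReal δ) ^ p :=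
      ENNReal.rpow_le_rpow h.le hp0.le
    rw [← ENNReal.rpow_mul, one_div_mul_cancel hp0.ne', ENNReal.rpow_one] at h1
    rwa [ENNReal.ofReal_rpow_of_pos hδ] at h1
  have hdecomp : I = ∑ B ∈ β, ∫⁻ x in B, (‖g x‖₊ : ℝ≥0∞) ^ p ∂μ := by
    rw [hI, ← setLIntegral_univ, ← hβ.2.2]
    have hd := lintegral_biUnion_finset (μ := μ) (f := fun x => (‖g x‖₊ : ℝ≥0∞) ^ p)
      hβ.2.1 hβ.1
    simpa using hd
  have hcell : ∀ B ∈ β, ENNReal.ofReal ((μ B).toReal *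
      (min ((μ (A ∩ B)).toReal / (μ B).toReal) (1 - (μ (A ∩ B)).toReal / (μ B).toReal)) ^ p)
      ≤ 2 * ∫⁻ x in B, (‖g x‖₊ : ℝ≥0∞) ^ p ∂μ := by
    intro B hBmem
    by_cases hw0 : μ B = 0
    · simp [ENNReal.toReal_eq_zero_iff, hw0]
    set t := (μ (A ∩ B)).toReal with htdef
    set w := (μ B).toReal with hwdef
    set c := t / w with hcdef
    have hBfin : μ B ≠ ∞ := measure_ne_top μ B
    have hABfin : μ (A ∩ B) ≠ ∞ := measure_ne_top μ _
    have hABle : μ (A ∩ B) ≤ μ B := measure_mono Set.inter_subset_right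
    have hwpos : 0 < w := ENNReal.toReal_pos hw0 hBfin
    have ht0 : 0 ≤ t := ENNReal.toReal_nonneg
    have hc0 : 0 ≤ c := div_nonneg ht0 hwpos.le
    have hc1 : c ≤ 1 := (div_le_one hwpos).2 ((ENNReal.toReal_le_toReal hABfin hBfin).2 hABle)
    have htc : t = c * w := by rw [hcdef, div_mul_cancel₀ t hwpos.ne']
    have hgx : ∀ x ∈ B, g x = c - Set.indicator A 1 x := by
      intro x hx
      simp only [hg, Pi.sub_apply]
      rw [condExpPart_eq μ hβ.2.1 hA hBmem hx]
    rcases le_or_gt c (1/2) with hch | hch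
    · have hm : min c (1 - c) = c := min_eq_left (by linarith)
      rw [hm]
      set S := B \ A with hS
      have hSm : MeasurableSet S := (hβ.1 B hBmem).diff hA
      have hSsub : S ⊆ B := Set.diff_subset
      have hval : ∫⁻ x in S, (‖g x‖₊ : ℝ≥0∞) ^ p ∂μ = ENNReal.ofReal (c ^ p) * μ S := by
        rw [setLIntegral_congr_fun hSm (fun x hx => ?_),
          setLIntegral_const]
        have hgc : g x = c := by
          rw [hgx x hx.1, Set.indicator_of_notMem hx.2]; ring
        rw [hgc, ← enorm_eq_nnnorm, Real.enorm_eq_ofReal hc0, ENNReal.ofReal_rpow_of_nonneg hc0 hp0.le]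
      have hmS : (μ S).toReal = w - t := by
        rw [show S = B \ (A ∩ B) from by rw [hS, Set.diff_inter_self_eq_diff]]
        rw [measure_diff Set.inter_subset_right (hA.inter (hβ.1 B hBmem)).nullMeasurableSet
          hABfin, ENNReal.toReal_sub_of_le hABle hBfin]
      calc ENNReal.ofReal (w * c ^ p)
          ≤ ENNReal.ofReal (2 * (c ^ p * (μ S).toReal)) := by
            apply ENNReal.ofReal_le_ofReal
            have hw2 : w ≤ 2 * (μ S).toReal := by rw [hmS]; nlinarith
            nlinarith [Real.rpow_nonneg hc0 p]
        _ = 2 * (ENNReal.ofReal (c ^ p) * μ S) := by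
            rw [ENNReal.ofReal_mul (by norm_num), ENNReal.ofReal_mul (Real.rpow_nonneg hc0 p),
              ENNReal.ofReal_toReal (measure_ne_top μ S), ENNReal.ofReal_ofNat]
        _ = 2 * ∫⁻ x in S, (‖g x‖₊ : ℝ≥0∞) ^ p ∂μ := by rw [hval]
        _ ≤ 2 * ∫⁻ x in B, (‖g x‖₊ : ℝ≥0∞) ^ p ∂μ := by
            gcongr
    · have hm : min c (1 - c) = 1 - c := min_eq_right (by linarith)
      rw [hm]
      set S := A ∩ B with hS
      have hSm : MeasurableSet S := hA.inter (hβ.1 B hBmem)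
      have hSsub : S ⊆ B := Set.inter_subset_right
      have h1c : 0 ≤ 1 - c := by linarith
      have hval : ∫⁻ x in S, (‖g x‖₊ : ℝ≥0∞) ^ p ∂μ = ENNReal.ofReal ((1 - c) ^ p) * μ S := by
        rw [setLIntegral_congr_fun hSm (fun x hx => ?_),
          setLIntegral_const]
        have hgc : g x = -(1 - c) := by
          rw [hgx x hx.2, Set.indicator_of_mem hx.1, Pi.one_apply]; ring
        rw [hgc, nnnorm_neg, ← enorm_eq_nnnorm, Real.enorm_eq_ofReal h1c,
          ENNReal.ofReal_rpow_of_nonneg h1c hp0.le]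
      have hmS : (μ S).toReal = t := rfl
      calc ENNReal.ofReal (w * (1 - c) ^ p)
          ≤ ENNReal.ofReal (2 * ((1 - c) ^ p * (μ S).toReal)) := by
            apply ENNReal.ofReal_le_ofReal
            have hw2 : w ≤ 2 * (μ S).toReal := by rw [hmS]; nlinarith
            nlinarith [Real.rpow_nonneg h1c p]
        _ = 2 * (ENNReal.ofReal ((1 - c) ^ p) * μ S) := by
            rw [ENNReal.ofReal_mul (by norm_num), ENNReal.ofReal_mul (Real.rpow_nonneg h1c p),
              ENNReal.ofReal_toReal (measure_ne_top μ S), ENNReal.ofReal_ofNat]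
        _ = 2 * ∫⁻ x in S, (‖g x‖₊ : ℝ≥0∞) ^ p ∂μ := by rw [hval]
        _ ≤ 2 * ∫⁻ x in B, (‖g x‖₊ : ℝ≥0∞) ^ p ∂μ := by
            gcongr
  have hnn : ∀ B ∈ β, 0 ≤ (μ B).toReal *
      (min ((μ (A ∩ B)).toReal / (μ B).toReal) (1 - (μ (A ∩ B)).toReal / (μ B).toReal)) ^ p := by
    intro B _
    by_cases hw0 : μ B = 0
    · simp [hw0]
    have hwpos : 0 < (μ B).toReal := ENNReal.toReal_pos hw0 (measure_ne_top μ B)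
    have hc0 : 0 ≤ (μ (A ∩ B)).toReal / (μ B).toReal :=
      div_nonneg ENNReal.toReal_nonneg hwpos.le
    have hc1 : (μ (A ∩ B)).toReal / (μ B).toReal ≤ 1 := (div_le_one hwpos).2
      ((ENNReal.toReal_le_toReal (measure_ne_top μ _) (measure_ne_top μ B)).2
        (measure_mono Set.inter_subset_right))
    exact mul_nonneg ENNReal.toReal_nonneg (Real.rpow_nonneg (le_min hc0 (by linarith)) p)
  have key : ENNReal.ofReal (∑ B ∈ β, (μ B).toReal *
      (min ((μ (A ∩ B)).toReal / (μ B).toReal) (1 - (μ (A ∩ B)).toReal / (μ B).toReal)) ^ p)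
      ≤ ENNReal.ofReal (2 * δ ^ p) := by
    calc ENNReal.ofReal (∑ B ∈ β, (μ B).toReal *
        (min ((μ (A ∩ B)).toReal / (μ B).toReal) (1 - (μ (A ∩ B)).toReal / (μ B).toReal)) ^ p)
        = ∑ B ∈ β, ENNReal.ofReal ((μ B).toReal *
          (min ((μ (A ∩ B)).toReal / (μ B).toReal)
            (1 - (μ (A ∩ B)).toReal / (μ B).toReal)) ^ p) :=
          ENNReal.ofReal_sum_of_nonneg hnn
      _ ≤ ∑ B ∈ β, 2 * ∫⁻ x in B, (‖g x‖₊ : ℝ≥0∞) ^ p ∂μ := Finset.sum_le_sum hcell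
      _ = 2 * I := by rw [← Finset.mul_sum, hdecomp]
      _ ≤ 2 * ENNReal.ofReal (δ ^ p) := by gcongr
      _ = ENNReal.ofReal (2 * δ ^ p) := by
          rw [ENNReal.ofReal_mul (by norm_num), ENNReal.ofReal_ofNat]
  exact (ENNReal.ofReal_le_ofReal_iff (by positivity)).1 key

/-- Let `(X, Σ, μ)` be a probability space, `κ ∈ ℕ`, `p ∈ [1, ∞)` and
`ε > 0`. Then there is `δ > 0` such that for all finite measurable partitions `α`, `β` of `X`
with `|α| ≤ κ` and `sup_{A ∈ α} ‖E[1_A | β] - 1_A‖_p < δ`, one has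
`H_μ(α | β) = H_μ(α ∨ β) - H_μ(β) < ε`. -/
theorem stmt5 {X : Type*} [MeasurableSpace X] (μ : Measure X) [IsProbabilityMeasure μ]
    (κ : ℕ) (p : ℝ) (hp : 1 ≤ p) (ε : ℝ) (hε : 0 < ε) :
    ∃ δ : ℝ, 0 < δ ∧
      ∀ α β : Finset (Set X), IsMeasPartition α → IsMeasPartition β → α.card ≤ κ →
        (∀ A ∈ α,
          eLpNorm (condExpPart μ β (Set.indicator A 1) - Set.indicator A 1)
            (ENNReal.ofReal p) μ < ENNReal.ofReal δ) →
        staticEntropy μ (commonRefine α β) - staticEntropy μ β < ε := by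
  have hp0 : (0:ℝ) < p := lt_of_lt_of_le one_pos hp
  set η : ℝ := ε / (2 * κ + 2) with hηdef
  have hη : 0 < η := by positivity
  set m0 : ℝ := min η 1 with hm0def
  have hm00 : 0 < m0 := lt_min hη one_pos
  refine ⟨m0 ^ 2 / 2, by positivity, ?_⟩
  intro α β hα hβ hcard hyp
  set δ : ℝ := m0 ^ 2 / 2 with hδdef
  have hδ : 0 < δ := by positivity
  rw [entropy_diff μ hα hβ]
  have hc01 : ∀ (A B : Set X), 0 ≤ (μ (A ∩ B)).toReal / (μ B).toReal ∧
      (μ (A ∩ B)).toReal / (μ B).toReal ≤ 1 := by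
    intro A B
    by_cases hw : (μ B).toReal = 0
    · simp [hw]
    have hwpos : 0 < (μ B).toReal := lt_of_le_of_ne ENNReal.toReal_nonneg (Ne.symm hw)
    exact ⟨div_nonneg ENNReal.toReal_nonneg hwpos.le,
      (div_le_one hwpos).2 ((ENNReal.toReal_le_toReal (measure_ne_top μ _)
        (measure_ne_top μ B)).2 (measure_mono Set.inter_subset_right))⟩
  have hβsum : ∑ B ∈ β, (μ B).toReal = 1 := by
    rw [← ENNReal.toReal_sum (fun B _ => measure_ne_top μ _), part_sum μ hβ,
      ENNReal.toReal_one]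
  have hδbound : (2 * δ ^ p) ^ (1 / (2 * p)) ≤ η := by
    have h1 : δ ^ p = (m0 ^ 2 : ℝ) ^ p / 2 ^ p := by
      rw [hδdef, Real.div_rpow (by positivity) (by norm_num)]
    have h2p : (2:ℝ) ≤ 2 ^ p := by
      calc (2:ℝ) = 2 ^ (1:ℝ) := (Real.rpow_one 2).symm
        _ ≤ 2 ^ p := Real.rpow_le_rpow_of_exponent_le (by norm_num) hp
    have hm2 : (m0 ^ 2 : ℝ) ^ p = m0 ^ (2 * p) := by
      rw [← Real.rpow_natCast m0 2, ← Real.rpow_mul hm00.le]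
      norm_num
    have h3 : 2 * δ ^ p ≤ m0 ^ (2 * p) := by
      rw [h1, hm2]
      have hpos : 0 ≤ m0 ^ (2*p) := Real.rpow_nonneg hm00.le _
      calc 2 * (m0 ^ (2*p) / 2 ^ p) ≤ 2 * (m0 ^ (2*p) / 2) := by gcongr
        _ = m0 ^ (2*p) := by ring
    have h4 : m0 ^ (2*p) ≤ η ^ (2*p) :=
      Real.rpow_le_rpow hm00.le (min_le_left _ _) (by positivity)
    calc (2*δ^p)^(1/(2*p)) ≤ (η^(2*p))^(1/(2*p)) :=
          Real.rpow_le_rpow (by positivity) (h3.trans h4) (by positivity)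
      _ = η := by
          rw [← Real.rpow_mul hη.le, mul_one_div, div_self (by positivity : (2:ℝ)*p ≠ 0),
            Real.rpow_one]
  have hperA : ∀ A ∈ α, (∑ B ∈ β, (μ B).toReal *
      Real.negMulLog ((μ (A ∩ B)).toReal / (μ B).toReal)) ≤ 2 * η := by
    intro A hA
    have hlp := lp_bound μ hβ (hα.1 A hA) hp hδ (hyp A hA)
    set z : Set X → ℝ := fun B => Real.sqrt
      (min ((μ (A ∩ B)).toReal / (μ B).toReal)
        (1 - (μ (A ∩ B)).toReal / (μ B).toReal)) with hzdef
    have step2 : ∑ B ∈ β, (μ B).toReal * Real.negMulLog ((μ (A ∩ B)).toReal / (μ B).toReal)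
        ≤ ∑ B ∈ β, (μ B).toReal * (2 * z B) :=
      Finset.sum_le_sum fun B _ => mul_le_mul_of_nonneg_left
        (nML_le_sqrt (hc01 A B).1 (hc01 A B).2) ENNReal.toReal_nonneg
    have step3 : ∑ B ∈ β, (μ B).toReal * z B
        ≤ (∑ B ∈ β, (μ B).toReal * z B ^ (2*p)) ^ (1/(2*p)) :=
      Real.arith_mean_le_rpow_mean β _ z (fun B _ => ENNReal.toReal_nonneg) hβsum
        (fun B _ => Real.sqrt_nonneg _) (by linarith)
    have hzp : ∀ B, z B ^ (2*p)
        = (min ((μ (A ∩ B)).toReal / (μ B).toReal)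
            (1 - (μ (A ∩ B)).toReal / (μ B).toReal)) ^ p := by
      intro B
      have hmnn : 0 ≤ min ((μ (A ∩ B)).toReal / (μ B).toReal)
          (1 - (μ (A ∩ B)).toReal / (μ B).toReal) :=
        le_min (hc01 A B).1 (by linarith [(hc01 A B).2])
      rw [hzdef]
      simp only
      rw [Real.sqrt_eq_rpow, ← Real.rpow_mul hmnn, show (1/2) * (2*p) = p by ring]
    have step4 : (∑ B ∈ β, (μ B).toReal * z B ^ (2*p)) ^ (1/(2*p))
        ≤ (2*δ^p)^(1/(2*p)) := by
      apply Real.rpow_le_rpow ?_ ?_ (by positivity)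
      · refine Finset.sum_nonneg fun B _ => mul_nonneg ENNReal.toReal_nonneg ?_
        rw [hzp B]
        exact Real.rpow_nonneg (le_min (hc01 A B).1 (by linarith [(hc01 A B).2])) p
      · calc ∑ B ∈ β, (μ B).toReal * z B ^ (2*p)
            = ∑ B ∈ β, (μ B).toReal *
              (min ((μ (A ∩ B)).toReal / (μ B).toReal)
                (1 - (μ (A ∩ B)).toReal / (μ B).toReal)) ^ p :=
              Finset.sum_congr rfl fun B _ => by rw [hzp B]
          _ ≤ 2 * δ ^ p := hlp
    calc ∑ B ∈ β, (μ B).toReal * Real.negMulLog ((μ (A ∩ B)).toReal / (μ B).toReal)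
        ≤ ∑ B ∈ β, (μ B).toReal * (2 * z B) := step2
      _ = 2 * ∑ B ∈ β, (μ B).toReal * z B := by
          rw [Finset.mul_sum]
          exact Finset.sum_congr rfl fun B _ => by ring
      _ ≤ 2 * ((2*δ^p)^(1/(2*p))) := by
          have := step3.trans step4
          linarith
      _ ≤ 2 * η := by linarith [hδbound]
  calc ∑ B ∈ β, (μ B).toReal *
        ∑ A ∈ α, Real.negMulLog ((μ (A ∩ B)).toReal / (μ B).toReal)
      = ∑ A ∈ α, ∑ B ∈ β, (μ B).toReal *
        Real.negMulLog ((μ (A ∩ B)).toReal / (μ B).toReal) := by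
        simp_rw [Finset.mul_sum]
        exact Finset.sum_comm
    _ ≤ ∑ _A ∈ α, 2 * η := Finset.sum_le_sum hperA
    _ = α.card * (2 * η) := by rw [Finset.sum_const, nsmul_eq_mul]
    _ ≤ κ * (2 * η) := by
        have : (α.card : ℝ) ≤ κ := by exact_mod_cast hcard
        nlinarith [hη]
    _ < ε := by
        have h2κ : (0:ℝ) < 2 * κ + 2 := by positivity
        have heq : (κ:ℝ) * (2 * η) = (2 * κ * ε) / (2 * κ + 2) := by
          rw [hηdef]; ring
        rw [heq, div_lt_iff₀ h2κ]
        nlinarith [hε, Nat.cast_nonneg (α := ℝ) κ]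
end

section
/- Let T : H → H be a unitary operator on a Hilbert space H that has a countable Lebesgue component. Then h_apr(T) = ∞, i.e., the approximation entropy of T is not bounded by any real number. -/
open MeasureTheory

/-- A unitary operator `T` on a Hilbert space has a *countable Lebesgue component* if there is
an orthonormal family `e : ℕ × ℤ → H` with `T (e (n, k)) = e (n, k + 1)`. (Equivalently:
`H₀ := closed span of the e (n, k)` is a closed separable subspace with `T H₀ = H₀` on which
`T` has countable Lebesgue spectrum, the `xₙ := e (n, 0)` being the orthonormal sequence whose
orbits `(T^k xₙ)_{k ∈ ℤ} = (e (n, k))_{k ∈ ℤ}` are orthonormal bases of the cyclic subspaces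
`Z(xₙ; T)` with `H₀ = ⊕ₙ Z(xₙ; T)`.) -/
def HasCountableLebesgueComponent {H : Type*} [NormedAddCommGroup H]
    [InnerProductSpace ℂ H] (T : H → H) : Prop :=
  ∃ e : ℕ × ℤ → H, Orthonormal ℂ e ∧ ∀ (n : ℕ) (k : ℤ), T (e (n, k)) = e (n, k + 1)


local notation "⟪" x ", " y "⟫" => @inner ℂ _ _ x y

/-- Dimension lower bound: a finite-dimensional subspace δ-approximating an orthonormal
family of `M` vectors has dimension at least `M * (1 - δ²)`. -/
lemma dim_lb {H : Type*} [NormedAddCommGroup H] [InnerProductSpace ℂ H]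
    {ι : Type*} [Fintype ι] {x : ι → H} (hx : Orthonormal ℂ x)
    (F : Submodule ℂ H) [FiniteDimensional ℂ F] {δ : ℝ}
    (h : ∀ i, ∃ y ∈ F, ‖x i - y‖ < δ) :
    (Fintype.card ι : ℝ) * (1 - δ ^ 2) ≤ (Module.finrank ℂ F : ℝ) := by
  haveI : CompleteSpace F := FiniteDimensional.complete ℂ F
  set P := fun u : H => F.orthogonalProjectionOnto u with hP
  have h1 : ∀ i, 1 - δ ^ 2 ≤ ‖(P (x i) : H)‖ ^ 2 := by
    intro i
    obtain ⟨y, hyF, hy⟩ := h i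
    have hmin : ‖x i - (P (x i) : H)‖ ≤ ‖x i - y‖ := by
      simp only [hP, Submodule.coe_orthogonalProjectionOnto_apply]; rw [Submodule.starProjection_minimal]
      exact ciInf_le ⟨0, by rintro r ⟨v, rfl⟩; exact norm_nonneg _⟩ (⟨y, hyF⟩ : F)
    have h2 : ‖x i - (P (x i) : H)‖ < δ := lt_of_le_of_lt hmin hy
    have h3 := Submodule.orthogonalProjectionFn_norm_sq F (x i)
    rw [Submodule.orthogonalProjectionFn_eq] at h3
    have h4 : ‖x i‖ = 1 := hx.1 i
    have h5 : (0:ℝ) ≤ ‖x i - (P (x i) : H)‖ := norm_nonneg _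
    nlinarith [h3, h2, h5]
  -- expand ‖P u‖² via an orthonormal basis of F
  let b := stdOrthonormalBasis ℂ F
  have h6 : ∀ u : H, ‖(P u : H)‖ ^ 2 = ∑ j, ‖⟪(b j : H), u⟫‖ ^ 2 := by
    intro u
    have : ‖(P u : H)‖ = ‖b.repr (P u)‖ := by
      rw [LinearIsometryEquiv.norm_map b.repr (P u)]; exact (Submodule.norm_coe (𝕜 := ℂ) (P u)).symm
    rw [this, EuclideanSpace.norm_eq, Real.sq_sqrt (by positivity)]
    congr 1
    ext j
    rw [b.repr_apply_apply, Submodule.inner_orthogonalProjectionOnto_eq_of_mem_left]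
  have h7 : ∑ i, ‖(P (x i) : H)‖ ^ 2 ≤ (Module.finrank ℂ F : ℝ) := by
    calc ∑ i, ‖(P (x i) : H)‖ ^ 2 = ∑ i, ∑ j, ‖⟪(b j : H), x i⟫‖ ^ 2 := by
          simp only [h6]
      _ = ∑ j, ∑ i, ‖⟪(b j : H), x i⟫‖ ^ 2 := Finset.sum_comm
      _ ≤ ∑ j : Fin (Module.finrank ℂ F), (1:ℝ) := by
          apply Finset.sum_le_sum
          intro j _
          have := hx.sum_inner_products_le (s := Finset.univ) ((b j : H))
          have hb1 : ‖(b j : H)‖ = 1 := by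
            rw [Submodule.norm_coe (𝕜 := ℂ)]; exact b.orthonormal.1 j
          calc ∑ i, ‖⟪(b j : H), x i⟫‖ ^ 2 = ∑ i, ‖⟪x i, (b j : H)⟫‖ ^ 2 := by
                simp_rw [norm_inner_symm]
            _ ≤ ‖(b j : H)‖ ^ 2 := this
            _ = 1 := by rw [hb1]; norm_num
      _ = (Module.finrank ℂ F : ℝ) := by simp
  calc (Fintype.card ι : ℝ) * (1 - δ ^ 2) = ∑ _i : ι, (1 - δ ^ 2) := by
        rw [Finset.sum_const, Finset.card_univ, nsmul_eq_mul]
    _ ≤ ∑ i, ‖(P (x i) : H)‖ ^ 2 := Finset.sum_le_sum fun i _ => h1 i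
    _ ≤ _ := h7

/-- Lower bound on `Hapr` of a finite set containing an orthonormal family. -/
lemma Hapr_lb {H : Type*} [NormedAddCommGroup H] [InnerProductSpace ℂ H]
    {S : Set H} (hS : S.Finite) {ι : Type*} [Fintype ι] {x : ι → H}
    (hx : Orthonormal ℂ x) (hxS : ∀ i, x i ∈ S) {δ : ℝ} (hδ : 0 < δ) :
    (Fintype.card ι : ℝ) * (1 - δ ^ 2) ≤ (Hapr S δ : ℝ) := by
  have hne : {d : ℕ | ∃ F : Submodule ℂ H, FiniteDimensional ℂ ↥F ∧
      Module.finrank ℂ ↥F = d ∧ ∀ x ∈ S, ∃ y ∈ F, ‖x - y‖ < δ}.Nonempty := by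
    haveI := FiniteDimensional.span_of_finite ℂ hS
    exact ⟨Module.finrank ℂ (Submodule.span ℂ S), Submodule.span ℂ S, inferInstance, rfl,
      fun z hz => ⟨z, Submodule.subset_span hz, by simpa using hδ⟩⟩
  obtain ⟨F, hFin, hrank, happ⟩ := Nat.sInf_mem hne
  haveI := hFin
  rw [Hapr, hrank.symm]
  exact dim_lb hx F fun i => happ _ (hxS i)

/-- Upper bound: `Hapr` of a finite set is at most its cardinality. -/
lemma Hapr_ub {H : Type*} [NormedAddCommGroup H] [InnerProductSpace ℂ H]
    (t : Finset H) {δ : ℝ} (hδ : 0 < δ) : Hapr (↑t : Set H) δ ≤ t.card := by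
  haveI := FiniteDimensional.span_of_finite ℂ t.finite_toSet
  have hmem : Module.finrank ℂ (Submodule.span ℂ (↑t : Set H)) ∈
      {d : ℕ | ∃ F : Submodule ℂ H, FiniteDimensional ℂ ↥F ∧
        Module.finrank ℂ ↥F = d ∧ ∀ x ∈ (↑t : Set H), ∃ y ∈ F, ‖x - y‖ < δ} :=
    ⟨Submodule.span ℂ (↑t : Set H), inferInstance, rfl,
      fun z hz => ⟨z, Submodule.subset_span hz, by simpa using hδ⟩⟩
  exact le_trans (Nat.sInf_le hmem) (finrank_span_finset_le_card t)

/-- If a unitary operator `T` on a Hilbert space `H` has a countable Lebesgue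
component, then `h_apr(T) = ∞`, i.e. the approximation entropy of `T` is not bounded by any
real number. -/
theorem stmt10 {H : Type*} [NormedAddCommGroup H] [InnerProductSpace ℂ H] [CompleteSpace H]
    (T : H ≃ₗᵢ[ℂ] H) (hT : HasCountableLebesgueComponent (⇑T)) :
    ∀ C : ℝ, ∃ ω : Finset H, C < haprω (⇑T) (ω : Set H) := by
  classical
  obtain ⟨e, he, heT⟩ := hT
  intro C
  obtain ⟨N, hN⟩ := exists_nat_gt (C * (4 / 3))
  set ω : Finset H := (Finset.range N).image (fun m => e (m, 0)) with hω
  refine ⟨ω, ?_⟩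
  -- iterates of T on the orthonormal family
  have hiter : ∀ (m k : ℕ), (⇑T)^[k] (e (m, 0)) = e (m, (k : ℤ)) := by
    intro m k
    induction k with
    | zero => simp
    | succ k ih =>
        rw [Function.iterate_succ_apply', ih, heT m (k : ℤ)]
        congr 1
  have hmem : ∀ m < N, e (m, 0) ∈ (ω : Set H) := by
    intro m hm
    simp only [hω, Finset.coe_image, Set.mem_image, Finset.mem_coe, Finset.mem_range]
    exact ⟨m, hm, rfl⟩
  -- the union sets
  have hUeq : ∀ n : ℕ, (⋃ k < n, (⇑T)^[k] '' (ω : Set H)) =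
      ↑((Finset.range n).biUnion fun k => ω.image ((⇑T)^[k])) := by
    intro n
    ext y
    simp only [Set.mem_iUnion, Set.mem_image, Finset.coe_biUnion, Finset.mem_coe,
      Finset.mem_biUnion, Finset.mem_range, Finset.coe_image, Finset.mem_image]
  -- upper bound on the terms of the limsup
  have hub : ∀ (δ : ℝ), 0 < δ → ∀ n : ℕ,
      (Hapr (⋃ k < n, (⇑T)^[k] '' (ω : Set H)) δ : ℝ) / n ≤ (ω.card : ℝ) := by
    intro δ hδ n
    rcases Nat.eq_zero_or_pos n with rfl | hn
    · simp
    · rw [div_le_iff₀ (by exact_mod_cast hn)]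
      have h1 : Hapr (⋃ k < n, (⇑T)^[k] '' (ω : Set H)) δ ≤
          ((Finset.range n).biUnion fun k => ω.image ((⇑T)^[k])).card := by
        rw [hUeq n]; exact Hapr_ub _ hδ
      have h2 : ((Finset.range n).biUnion fun k => ω.image ((⇑T)^[k])).card ≤ n * ω.card := by
        refine le_trans Finset.card_biUnion_le ?_
        calc ∑ k ∈ Finset.range n, (ω.image ((⇑T)^[k])).card
            ≤ ∑ _k ∈ Finset.range n, ω.card :=
              Finset.sum_le_sum fun k _ => Finset.card_image_le
          _ = n * ω.card := by rw [Finset.sum_const, Finset.card_range, smul_eq_mul]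
      calc (Hapr (⋃ k < n, (⇑T)^[k] '' (ω : Set H)) δ : ℝ) ≤ ((n * ω.card : ℕ) : ℝ) := by
            exact_mod_cast le_trans h1 h2
        _ = (ω.card : ℝ) * n := by push_cast; ring
  have hterm_nonneg : ∀ (δ : ℝ) (n : ℕ),
      (0:ℝ) ≤ (Hapr (⋃ k < n, (⇑T)^[k] '' (ω : Set H)) δ : ℝ) / n := by
    intro δ n; positivity
  -- the limsup is bounded above by `ω.card`
  have hboundδ : ∀ δ : ℝ, 0 < δ → haprδ (⇑T) (ω : Set H) δ ≤ (ω.card : ℝ) := by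
    intro δ hδ
    have hcb : Filter.IsBoundedUnder (· ≥ ·) Filter.atTop
        (fun n : ℕ => (Hapr (⋃ k < n, (⇑T)^[k] '' (ω : Set H)) δ : ℝ) / n) :=
      Filter.isBoundedUnder_of ⟨0, fun n => hterm_nonneg δ n⟩
    exact Filter.limsup_le_of_le hcb.isCoboundedUnder_le
      (Filter.Eventually.of_forall (hub δ hδ))
  -- lower bound on the limsup at δ = 1/2
  have hlb : (N : ℝ) * (3 / 4) ≤ haprδ (⇑T) (ω : Set H) (1 / 2) := by
    refine Filter.le_limsup_of_frequently_le ?_ ?_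
    · apply Filter.Eventually.frequently
      filter_upwards [Filter.eventually_ge_atTop 1] with n hn
      have hnpos : (0:ℝ) < n := by exact_mod_cast hn
      rw [le_div_iff₀ hnpos]
      -- the orthonormal family of `N * n` vectors inside the union
      have hx : Orthonormal ℂ (fun p : Fin N × Fin n => e ((p.1 : ℕ), ((p.2 : ℕ) : ℤ))) := by
        apply he.comp
        intro p q hpq
        simp only [Prod.mk.injEq] at hpq
        obtain ⟨h1, h2⟩ := hpq
        ext
        · exact_mod_cast h1
        · exact_mod_cast h2
      have hxS : ∀ p : Fin N × Fin n,
          e ((p.1 : ℕ), ((p.2 : ℕ) : ℤ)) ∈ ⋃ k < n, (⇑T)^[k] '' (ω : Set H) := by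
        intro p
        refine Set.mem_iUnion.2 ⟨(p.2 : ℕ), Set.mem_iUnion.2 ⟨p.2.2, ?_⟩⟩
        exact ⟨e ((p.1 : ℕ), 0), hmem _ p.1.2, hiter _ _⟩
      have hfin : (⋃ k < n, (⇑T)^[k] '' (ω : Set H)).Finite := by
        rw [hUeq n]; exact Finset.finite_toSet _
      have key := Hapr_lb hfin hx hxS (by norm_num : (0:ℝ) < 1/2)
      rw [Fintype.card_prod, Fintype.card_fin, Fintype.card_fin] at key
      have : ((N * n : ℕ) : ℝ) * (1 - (1/2:ℝ)^2) = (N:ℝ) * (3/4) * n := by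
        push_cast; ring
      linarith [key, this ▸ key]
    · exact Filter.isBoundedUnder_of ⟨(ω.card : ℝ), hub (1/2) (by norm_num)⟩
  -- assemble: haprω ≥ haprδ at 1/2
  have hsup1 : ∀ δ : ℝ, (⨆ _ : 0 < δ, haprδ (⇑T) (ω : Set H) δ) ≤ (ω.card : ℝ) := by
    intro δ
    by_cases h : 0 < δ
    · rw [ciSup_pos h]; exact hboundδ δ h
    · haveI : IsEmpty (0 < δ) := ⟨h⟩
      rw [Real.iSup_of_isEmpty]
      positivity
  have hfinal : haprδ (⇑T) (ω : Set H) (1/2) ≤ haprω (⇑T) (ω : Set H) := by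
    have h1 : (⨆ _ : (0:ℝ) < 1/2, haprδ (⇑T) (ω : Set H) (1/2)) ≤ haprω (⇑T) (ω : Set H) :=
      le_ciSup (f := fun δ : ℝ => ⨆ _ : 0 < δ, haprδ (⇑T) (ω : Set H) δ)
        ⟨(ω.card : ℝ), by rintro r ⟨δ, rfl⟩; exact hsup1 δ⟩ (1/2 : ℝ)
    rwa [ciSup_pos (by norm_num : (0:ℝ) < 1/2)] at h1
  have hNC : C < (N : ℝ) * (3 / 4) := by linarith
  linarith
end
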